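/- Let B and C be unital C*-algebras, Φ : B → C a unital completely positive map, U a set of unitary elements of B such that Φ(u) is unitary in C for every u ∈ U, and m a state on C satisfying m(Φ(u)* y Φ(u)) = m(y) for every y ∈ C and every u ∈ U. Then the state m ∘ Φ on B satisfies (m ∘ Φ)(u* x u) = (m ∘ Φ)(x) for every x ∈ B and every u ∈ U. -/

import Mathlib

open scoped ComplexOrder

/-- A linear map `Φ : B → C` between (star) algebras is *completely positive* if for every
`n ≥ 1` the induced map `Mₙ(B) → Mₙ(C)` (applying `Φ` entrywise) maps positive elements to
positive elements, where an element of a C*-algebra is positive iff it is of the form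
`star N * N`. -/
def IsCompletelyPositive {B C : Type*} [Ring B] [StarRing B] [Module ℂ B]
    [Ring C] [StarRing C] [Module ℂ C] (Φ : B →ₗ[ℂ] C) : Prop :=
  ∀ (n : ℕ) (M : Matrix (Fin n) (Fin n) B),
    (∃ N : Matrix (Fin n) (Fin n) B, M = N.conjTranspose * N) →
    ∃ P : Matrix (Fin n) (Fin n) C, M.map Φ = P.conjTranspose * P

lemma cs_real (R S : ℝ) (hS : 0 ≤ S) (h : ∀ t : ℝ, 0 ≤ 2*(t*R) + t^2*S) : R = 0 := by
  have h1 := h (-(R/(S+1)))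
  have hS1 : (0:ℝ) < S + 1 := by linarith
  have hne : S + 1 ≠ 0 := ne_of_gt hS1
  field_simp at h1
  rw [zero_mul] at h1
  nlinarith [sq_nonneg R, hS1, mul_pos hS1 hS1]

lemma pos_lemma {B C : Type*} [Ring B] [StarRing B] [Module ℂ B]
    [Ring C] [StarRing C] [Module ℂ C]
    (Φ : B →ₗ[ℂ] C) (hΦ_cp : IsCompletelyPositive Φ)
    (m : C →ₗ[ℂ] ℂ) (hm_pos : ∀ y : C, 0 ≤ m (star y * y))
    (n : ℕ) (a : Fin n → B) (v : Fin n → C) :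
    0 ≤ m (∑ i, ∑ j, star (v i) * Φ (star (a i) * a j) * v j) := by
  rcases n with _ | n
  · simp
  obtain ⟨P, hP⟩ := hΦ_cp (n+1) (Matrix.of fun i j => star (a i) * a j)
    ⟨Matrix.of fun k j => if k = 0 then a j else 0, by
      ext i j
      simp [Matrix.mul_apply, Matrix.conjTranspose_apply, apply_ite]⟩
  have hP' : ∀ i j, Φ (star (a i) * a j) = ∑ k, star (P k i) * P k j := by
    intro i j
    have h := congrFun (congrFun hP i) j
    simpa [Matrix.map_apply, Matrix.of_apply, Matrix.mul_apply,
      Matrix.conjTranspose_apply] using h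
  have e1 : ∀ i j, star (v i) * Φ (star (a i) * a j) * v j
      = ∑ k, star (P k i * v i) * (P k j * v j) := by
    intro i j
    rw [hP', Finset.mul_sum, Finset.sum_mul]
    exact Finset.sum_congr rfl fun k _ => by simp only [star_mul, mul_assoc]
  have key : (∑ i, ∑ j, star (v i) * Φ (star (a i) * a j) * v j)
      = ∑ k, star (∑ i, P k i * v i) * (∑ j, P k j * v j) := by
    simp_rw [e1]
    calc ∑ i, ∑ j, ∑ k, star (P k i * v i) * (P k j * v j)
        = ∑ i, ∑ k, ∑ j, star (P k i * v i) * (P k j * v j) :=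
          Finset.sum_congr rfl fun i _ => Finset.sum_comm
      _ = ∑ k, ∑ i, ∑ j, star (P k i * v i) * (P k j * v j) := Finset.sum_comm
      _ = ∑ k, star (∑ i, P k i * v i) * (∑ j, P k j * v j) := by
          refine Finset.sum_congr rfl fun k _ => ?_
          rw [star_sum, Finset.sum_mul]
          exact Finset.sum_congr rfl fun i _ => (Finset.mul_sum _ _ _).symm
  rw [key, map_sum]
  exact Finset.sum_nonneg fun k _ => hm_pos _

open Complex in
theorem pol4 {A : Type*} [Ring A] [StarRing A] [Module ℂ A] [StarModule ℂ A]
    [SMulCommClass ℂ A A] [IsScalarTower ℂ A A] (x : A) :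
    (4:ℂ) • x = star (x + 1) * (x + 1)
      + I • (star (x + I • (1:A)) * (x + I • (1:A)))
      - star (x - 1) * (x - 1)
      - I • (star (x - I • (1:A)) * (x - I • (1:A))) := by
  simp only [star_add, star_sub, star_smul, star_one, RCLike.star_def, conj_I, neg_smul,
    mul_add, add_mul, sub_mul, mul_sub, smul_mul_assoc, mul_smul_comm, smul_smul,
    smul_add, smul_sub, mul_one, one_mul, mul_neg, neg_mul, neg_neg, smul_neg,
    Complex.I_mul_I]
  module

open Complex in
theorem star_linear {A T : Type*} [Ring A] [StarRing A] [Module ℂ A] [StarModule ℂ A]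
    [SMulCommClass ℂ A A] [IsScalarTower ℂ A A]
    [AddCommGroup T] [StarAddMonoid T] [Module ℂ T] [StarModule ℂ T]
    [NoZeroSMulDivisors ℂ T]
    (f : A →ₗ[ℂ] T) (hf : ∀ a : A, star (f (star a * a)) = f (star a * a)) (b : A) :
    star (f (star b)) = f b := by
  have e := pol4 (star b)
  set a0 : A := star b + 1 with ha0
  set a1 : A := star b + I • (1:A) with ha1
  set a2 : A := star b - 1 with ha2
  set a3 : A := star b - I • (1:A) with ha3
  -- apply f to e and star the result
  have ef : (4:ℂ) • f (star b)
      = f (star a0 * a0) + I • f (star a1 * a1) - f (star a2 * a2) - I • f (star a3 * a3) := by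
    rw [← map_smul, e]
    simp only [map_add, map_sub, map_smul]
  have ef_star : (4:ℂ) • star (f (star b))
      = f (star a0 * a0) - I • f (star a1 * a1) - f (star a2 * a2) + I • f (star a3 * a3) := by
    have h := congrArg star ef
    rw [star_smul] at h
    simp only [star_add, star_sub, star_smul, RCLike.star_def, conj_I, neg_smul, hf] at h
    rw [show (starRingEnd ℂ) (4:ℂ) = 4 from Complex.conj_ofNat 4] at h
    rw [h]; abel
  -- star e in A, then apply f
  have e2 : (4:ℂ) • b = star a0 * a0 - I • (star a1 * a1) - star a2 * a2 + I • (star a3 * a3) := by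
    have h := congrArg star e
    rw [star_smul, star_star] at h
    simp only [star_add, star_sub, star_smul, star_mul, star_star, RCLike.star_def, conj_I,
      neg_smul] at h
    rw [show (starRingEnd ℂ) (4:ℂ) = 4 from Complex.conj_ofNat 4] at h
    rw [h]; abel
  have ef2 : (4:ℂ) • f b
      = f (star a0 * a0) - I • f (star a1 * a1) - f (star a2 * a2) + I • f (star a3 * a3) := by
    rw [← map_smul, e2]
    simp only [map_add, map_sub, map_smul]
  have : (4:ℂ) • star (f (star b)) = (4:ℂ) • f b := by rw [ef_star, ef2]
  exact smul_right_injective T (by norm_num) this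


/-- Let `B` and `C` be unital C*-algebras, `Φ : B → C` a unital completely positive map,
`U` a set of unitary elements of `B` such that `Φ u` is unitary in `C` for every `u ∈ U`,
and `m` a state on `C` satisfying `m (star (Φ u) * y * Φ u) = m y` for every `y ∈ C` and
every `u ∈ U`.  Then the state `m ∘ Φ` on `B` satisfies
`(m ∘ Φ) (star u * x * u) = (m ∘ Φ) x` for every `x ∈ B` and every `u ∈ U`. -/
theorem state_comp_ucp_invariant
    {B C : Type*}
    [NormedRing B] [StarRing B] [CStarRing B] [NormedAlgebra ℂ B]
    [StarModule ℂ B] [CompleteSpace B]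
    [NormedRing C] [StarRing C] [CStarRing C] [NormedAlgebra ℂ C]
    [StarModule ℂ C] [CompleteSpace C]
    (Φ : B →ₗ[ℂ] C) (hΦ_one : Φ 1 = 1) (hΦ_cp : IsCompletelyPositive Φ)
    (U : Set B) (hU : ∀ u ∈ U, u ∈ unitary B)
    (hΦU : ∀ u ∈ U, Φ u ∈ unitary C)
    (m : C →ₗ[ℂ] ℂ) (hm_pos : ∀ y : C, 0 ≤ m (star y * y)) (hm_one : m 1 = 1)
    (hm_inv : ∀ u ∈ U, ∀ y : C, m (star (Φ u) * y * Φ u) = m y) :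
    ∀ u ∈ U, ∀ x : B, m (Φ (star u * x * u)) = m (Φ x) := by
  intro u hu x
  have huu : star u * u = 1 := (Unitary.mem_iff.mp (hU u hu)).1
  have hΦuu : star (Φ u) * Φ u = 1 := (Unitary.mem_iff.mp (hΦU u hu)).1
  -- Φ is star-preserving
  have hsaΦ : ∀ a : B, star (Φ (star a * a)) = Φ (star a * a) := by
    intro a
    obtain ⟨P, hP⟩ := hΦ_cp 1 (Matrix.of fun _ _ => star a * a)
      ⟨Matrix.of fun _ _ => a, by
        ext i j
        simp [Matrix.mul_apply, Matrix.conjTranspose_apply]⟩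
    have h := congrFun (congrFun hP 0) 0
    simp only [Matrix.map_apply, Matrix.of_apply, Matrix.mul_apply,
      Matrix.conjTranspose_apply, Fin.sum_univ_one] at h
    rw [h]
    simp [star_mul, star_star]
  have hΦstar : ∀ b : B, Φ (star b) = star (Φ b) := by
    intro b
    have := star_linear Φ hsaΦ b
    rw [← this, star_star]
  -- m is star-preserving
  have hsam : ∀ c : C, star (m (star c * c)) = m (star c * c) := by
    intro c
    have h := hm_pos c
    rw [Complex.le_def] at h
    rw [RCLike.star_def, Complex.conj_eq_iff_im]
    exact h.2.symm
  have hmstar : ∀ y : C, m (star y) = star (m y) := by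
    intro y
    have := star_linear m hsam y
    rw [← this, star_star]
  -- the null-vector Cauchy-Schwarz argument
  have null : ∀ (b : B) (w : C),
      m (star w * Φ (star b * u)) = m (star w * star (Φ b) * Φ u) := by
    intro b w
    have hq : ∀ (t : ℝ) (c : ℂ),
        0 ≤ (t:ℂ) * c * (m (Φ (star u * b) * w) - m (star (Φ u) * Φ b * w))
          + (starRingEnd ℂ) ((t:ℂ) * c)
              * (m (star w * Φ (star b * u)) - m (star w * star (Φ b) * Φ u))
          + (starRingEnd ℂ) ((t:ℂ) * c) * ((t:ℂ) * c)
              * m (star w * Φ (star b * b) * w) := by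
      intro t c
      have h0 := pos_lemma Φ hΦ_cp m hm_pos 3 ![u, 1, b] ![1, -(Φ u), ((t:ℂ) * c) • w]
      simp only [Fin.sum_univ_three, Matrix.cons_val_zero, Matrix.cons_val_one,
        Matrix.head_cons, Matrix.cons_val_two, Matrix.tail_cons] at h0
      simp only [star_one, one_mul, mul_one, star_neg, star_smul, RCLike.star_def,
        smul_mul_assoc, mul_smul_comm, neg_mul, mul_neg, neg_neg, smul_neg,
        huu, hΦ_one, hΦuu, hΦstar, map_add, map_neg, map_smul, smul_eq_mul,
        hm_one, map_mul, Complex.conj_ofReal, smul_smul] at h0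
      refine le_of_le_of_eq h0 ?_
      simp only [map_mul, Complex.conj_ofReal]
      ring
    -- hermitian symmetry
    have hX : m (Φ (star u * b) * w) - m (star (Φ u) * Φ b * w)
        = (starRingEnd ℂ) (m (star w * Φ (star b * u)) - m (star w * star (Φ b) * Φ u)) := by
      rw [map_sub]
      congr 1
      · rw [← RCLike.star_def, ← hmstar]
        congr 1
        rw [star_mul, star_star, ← hΦstar (star b * u)]
        congr 2
        simp [star_mul, star_star]
      · rw [← RCLike.star_def, ← hmstar]
        congr 1
        simp only [star_mul, star_star, mul_assoc]
    have hS : 0 ≤ m (star w * Φ (star b * b) * w) := by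
      have := pos_lemma Φ hΦ_cp m hm_pos 1 ![b] ![w]
      simpa [Fin.sum_univ_one] using this
    set S : ℂ := m (star w * Φ (star b * b) * w) with hSdef
    set Y : ℂ := m (star w * Φ (star b * u)) - m (star w * star (Φ b) * Φ u) with hYdef
    have hSre : 0 ≤ S.re := (Complex.le_def.mp hS).1
    have hre : Y.re = 0 := by
      apply cs_real _ S.re hSre
      intro t
      have h := hq t 1
      rw [hX] at h
      have h' := (Complex.le_def.mp h).1
      have hSim : (0:ℝ) = S.im := (Complex.le_def.mp hS).2
      simp only [mul_one, map_mul, Complex.conj_ofReal, map_one, Complex.add_re,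
        Complex.mul_re, Complex.ofReal_re, Complex.ofReal_im, Complex.conj_re,
        Complex.conj_im, Complex.zero_re, zero_mul, mul_zero, sub_zero, zero_sub,
        neg_mul, neg_neg, Complex.mul_im, add_zero, zero_add] at h'
      nlinarith [h']
    have him : Y.im = 0 := by
      apply cs_real _ S.re hSre
      intro t
      have h := hq t Complex.I
      rw [hX] at h
      have h' := (Complex.le_def.mp h).1
      have hSim : (0:ℝ) = S.im := (Complex.le_def.mp hS).2
      simp only [map_mul, Complex.conj_ofReal, Complex.conj_I, Complex.add_re,
        Complex.mul_re, Complex.mul_im, Complex.ofReal_re, Complex.ofReal_im,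
        Complex.conj_re, Complex.conj_im, Complex.I_re, Complex.I_im,
        Complex.zero_re, zero_mul, mul_zero, sub_zero, zero_sub, neg_mul, mul_neg,
        neg_neg, add_zero, zero_add, Complex.neg_re, Complex.neg_im, one_mul] at h'
      nlinarith [h']
    have hY0 : Y = 0 := Complex.ext hre him
    rw [hYdef] at hY0
    exact sub_eq_zero.mp hY0
  -- final chain
  have E1 : m (Φ (star u * x * u)) = m (Φ (star u * x) * Φ u) := by
    have h := null (star x * u) 1
    rw [← hΦstar (star x * u)] at h
    simpa [star_mul, star_star, mul_assoc] using h
  have E2 : m (Φ (star u * x) * Φ u) = m (Φ x) := by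
    have h1 : star (m (Φ (star u * x) * Φ u)) = m (star (Φ u) * Φ (star x * u)) := by
      rw [← hmstar]
      congr 1
      rw [star_mul, ← hΦstar (star u * x)]
      congr 1
      congr 1
      simp [star_mul, star_star]
    have h2 := null x (Φ u)
    have h3 := hm_inv u hu (star (Φ x))
    have h4 : m (star (Φ x)) = star (m (Φ x)) := hmstar _
    have h5 : star (m (Φ (star u * x) * Φ u)) = star (m (Φ x)) := by
      rw [h1, h2, h3, h4]
    exact star_injective h5
  rw [E1, E2]
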